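/- If r ∈ ℚ \ ℤ with r ≥ 4, then there is no multiset (n₁,…,n_s) of positive integers with ρ_r(n₁)+⋯+ρ_r(n_s) = r, where ρ_r(0)=0 and ρ_r(n+1) = r/(r − ρ_r(n)). -/

import Mathlib

/-- Rational version of the sequence ρ_r. -/
private def qseq (r : ℚ) : ℕ → ℚ
  | 0 => 0
  | n + 1 => r / (r - qseq r n)

/-- For rational non-integer r ≥ 4, the equation Σ ρ_r(nᵢ) = r has no solutions in
multisets of positive integers. -/
theorem stmt_5 (r : ℚ) (hr : 4 ≤ r) (hrZ : ¬ ∃ z : ℤ, (z : ℚ) = r)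
    (rho : ℕ → ℝ) (hrho0 : rho 0 = 0)
    (hrho : ∀ n : ℕ, rho (n + 1) = (r : ℝ) / ((r : ℝ) - rho n)) :
    ¬ ∃ M : Multiset ℕ, M ≠ 0 ∧ (∀ n ∈ M, 0 < n) ∧ (M.map rho).sum = (r : ℝ) := by
  rintro ⟨M, hM0, hMpos, hsum⟩
  -- rho is the real cast of the rational sequence qseq r
  have hcast : ∀ n, rho n = ((qseq r n : ℚ) : ℝ) := by
    intro n
    induction n with
    | zero => simp [hrho0, qseq]
    | succ n ih => rw [hrho n, ih, qseq]; push_cast; ring_nf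
  -- hence the rational sum equals r
  have hQsum : (M.map (qseq r)).sum = r := by
    have key : ∀ N : Multiset ℕ, (N.map rho).sum = (((N.map (qseq r)).sum : ℚ) : ℝ) := by
      intro N
      induction N using Multiset.induction with
      | empty => simp
      | cons a s ih =>
        simp only [Multiset.map_cons, Multiset.sum_cons, Rat.cast_add, ih, hcast a]
    exact_mod_cast (key M).symm.trans hsum
  -- r has denominator > 1, pick a prime p dividing it
  have hden : r.den ≠ 1 := by
    intro h
    exact hrZ ⟨r.num, by rw [← Rat.num_div_den r, h]; simp⟩
  obtain ⟨p, hp, hpd⟩ := Nat.exists_prime_and_dvd hden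
  haveI : Fact p.Prime := ⟨hp⟩
  -- r has p-adic norm > 1
  have hr0 : r ≠ 0 := by positivity
  have hvr : padicValRat p r < 0 := by
    rw [padicValRat]
    have h1 : padicValInt p r.num = 0 := by
      rw [padicValInt, padicValNat.eq_zero_of_not_dvd]
      intro hdvd
      exact hp.ne_one (((r.reduced).coprime_dvd_left hdvd).eq_one_of_dvd hpd)
    have h2 : 1 ≤ padicValNat p r.den :=
      one_le_padicValNat_of_dvd r.pos.ne' hpd
    omega
  have hnr : 1 < padicNorm p r := by
    rw [padicNorm.eq_zpow_of_nonzero hr0]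
    calc (1 : ℚ) < (p : ℚ) ^ (1 : ℤ) := by
          simpa using (by exact_mod_cast hp.one_lt : (1 : ℚ) < (p : ℚ))
      _ ≤ (p : ℚ) ^ (-padicValRat p r) := by
          apply zpow_le_zpow_right₀ (by exact_mod_cast hp.one_le) (by omega)
  -- every qseq r n has p-adic norm ≤ 1
  have hq_le : ∀ n, padicNorm p (qseq r n) ≤ 1 := by
    intro n
    induction n with
    | zero => simp [qseq]
    | succ n ih =>
      have hne : padicNorm p (-(qseq r n)) ≠ padicNorm p r := by
        rw [padicNorm.neg]; exact ne_of_lt (lt_of_le_of_lt ih hnr)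
      have hsub : padicNorm p (r - qseq r n) = padicNorm p r := by
        rw [sub_eq_add_neg, add_comm, padicNorm.add_eq_max_of_ne hne, padicNorm.neg]
        exact max_eq_right (le_of_lt (lt_of_le_of_lt ih hnr))
      rw [qseq, padicNorm.div, hsub, div_self (by positivity)]
  -- hence the multiset sum has p-adic norm ≤ 1, contradiction
  have hsum_le : ∀ N : Multiset ℕ, padicNorm p ((N.map (qseq r)).sum) ≤ 1 := by
    intro N
    induction N using Multiset.induction with
    | empty => simp
    | cons a s ih =>
      simp only [Multiset.map_cons, Multiset.sum_cons]
      exact le_trans padicNorm.nonarchimedean (max_le (hq_le a) ih)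
  have := hsum_le M
  rw [hQsum] at this
  exact absurd this (not_le.mpr hnr)
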